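/- Let M be a nonzero closed subspace of H with T_{α,β} M ⊆ M, and set M₁ := {x ∈ M : ⟨x, e_0⟩ = 0} (a closed subspace of M). Then M₁ ≠ {0}, M₁ is invariant under T_{α,β}, and either M = M₁ or the orthogonal complement M ⊖ M₁ is one-dimensional. (In the Hardy-space picture, M₁ = z²θH²(𝔻) for an inner function θ unique up to a unimodular scalar, so either M = z²θH²(𝔻) or dim(M ⊖ z²θH²(𝔻)) = 1.) -/

import Mathlib

open scoped ComplexConjugate

noncomputable section

/-- The Hilbert space `H = ℓ²(ℕ, ℂ)`. -/
abbrev H : Type := lp (fun _ : ℕ => ℂ) 2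

/-- The standard orthonormal basis vectors of `ℓ²(ℕ, ℂ)`. -/
noncomputable def e (n : ℕ) : H := lp.single 2 n (1 : ℂ)

namespace Aux

lemma inner_e_left (m : ℕ) (x : H) : (inner ℂ (e m) x : ℂ) = x m := by
  simp [e, lp.inner_single_left, RCLike.inner_apply]

lemma inner_e_right (m : ℕ) (x : H) : (inner ℂ x (e m) : ℂ) = conj (x m) := by
  simp [e, lp.inner_single_right, RCLike.inner_apply]

lemma e_apply (n m : ℕ) : (e n : ∀ _ : ℕ, ℂ) m = if m = n then 1 else 0 := by
  by_cases h : m = n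
  · subst h; simp [e, lp.single_apply_self]
  · simp [e, lp.single_apply_ne 2 n _ h, h]

lemma hasSum_coord (T : H →L[ℂ] H) (x : H) (m : ℕ) :
    HasSum (fun n => x n * ((T (e n)) m)) ((T x) m) := by
  have h1 : HasSum (fun n : ℕ => lp.single 2 n (x n)) x :=
    lp.hasSum_single ENNReal.ofNat_ne_top x
  have h1' : HasSum (fun n : ℕ => (x n) • e n) x := by
    refine h1.congr_fun fun n => ?_
    rw [e, ← lp.single_smul, smul_eq_mul, mul_one]
  have h2 : HasSum (fun n : ℕ => (x n) • T (e n)) (T x) := by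
    simpa using h1'.mapL T
  have h3 := h2.mapL (innerSL ℂ (e m))
  simpa [innerSL_apply_apply, inner_smul_right, inner_e_left] using h3

variable {α β : ℂ} {T : H →L[ℂ] H}

lemma coord0 (hT0 : T (e 0) = (α * conj β) • e 0 + β • e 1)
    (hTn : ∀ n : ℕ, 1 ≤ n → T (e n) = e (n + 1)) (x : H) :
    (T x) 0 = (α * conj β) * x 0 := by
  refine (hasSum_coord T x 0).unique ?_
  have : (fun n => x n * ((T (e n)) 0)) =
      fun n => if n = 0 then (α * conj β) * x 0 else 0 := by
    funext n
    rcases n with _ | k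
    · rw [hT0, lp.coeFn_add, lp.coeFn_smul, lp.coeFn_smul]; simp [e_apply, mul_comm]
    · rw [hTn (k+1) (Nat.le_add_left 1 k)]
      simp [e_apply]
  rw [this]
  exact hasSum_ite_eq 0 _

lemma coord1 (hT0 : T (e 0) = (α * conj β) • e 0 + β • e 1)
    (hTn : ∀ n : ℕ, 1 ≤ n → T (e n) = e (n + 1)) (x : H) :
    (T x) 1 = β * x 0 := by
  refine (hasSum_coord T x 1).unique ?_
  have : (fun n => x n * ((T (e n)) 1)) =
      fun n => if n = 0 then β * x 0 else 0 := by
    funext n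
    rcases n with _ | k
    · rw [hT0, lp.coeFn_add, lp.coeFn_smul, lp.coeFn_smul]; simp [e_apply, mul_comm]
    · rw [hTn (k+1) (Nat.le_add_left 1 k)]
      simp [e_apply]
  rw [this]
  exact hasSum_ite_eq 0 _

lemma coordS (hT0 : T (e 0) = (α * conj β) • e 0 + β • e 1)
    (hTn : ∀ n : ℕ, 1 ≤ n → T (e n) = e (n + 1)) (x : H) (k : ℕ) (hk : 1 ≤ k) :
    (T x) (k + 1) = x k := by
  refine (hasSum_coord T x (k+1)).unique ?_
  have : (fun n => x n * ((T (e n)) (k+1))) =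
      fun n => if n = k then x k else 0 := by
    funext n
    rcases n with _ | m
    · have hk1 : k + 1 ≠ 0 := by omega
      have hk2 : k + 1 ≠ 1 := by omega
      have hk0 : ¬ ((0:ℕ) = k) := by omega
      rw [hT0, lp.coeFn_add, lp.coeFn_smul, lp.coeFn_smul]; simp [e_apply, hk1, hk2, hk0, Ne.symm hk0]
    · rw [hTn (m+1) (Nat.le_add_left 1 m)]
      by_cases h : m + 1 = k
      · simp [e_apply, h]
      · have h2 : k + 1 ≠ m + 2 := by omega
        simp [e_apply, h, h2, Ne.symm h]
  rw [this]
  exact hasSum_ite_eq k _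

lemma eigen_eq_zero (hα : α ≠ 0) (hβ : β ≠ 0)
    (hnorm : ‖α‖ ^ 2 + ‖β‖ ^ 2 = 1)
    (hT0 : T (e 0) = (α * conj β) • e 0 + β • e 1)
    (hTn : ∀ n : ℕ, 1 ≤ n → T (e n) = e (n + 1))
    (v : H) (hv : T v = (α * conj β) • v) : v = 0 := by
  set lam : ℂ := α * conj β with hlam
  have hlamne : lam ≠ 0 := by
    refine mul_ne_zero hα fun h => hβ ?_
    simpa using congrArg (starRingEnd ℂ) h
  have hlamabs : ‖lam‖ ≤ 1 / 2 := by
    have h1 : ‖lam‖ = ‖α‖ * ‖β‖ := by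
      simp [hlam, map_mul, Complex.norm_conj]
    nlinarith [norm_nonneg α, norm_nonneg β,
      sq_nonneg (‖α‖ - ‖β‖)]
  -- relations
  have rel1 : ∀ k : ℕ, 1 ≤ k → v k = lam * v (k + 1) := by
    intro k hk
    have h1 := coordS hT0 hTn v k hk
    rw [hv] at h1
    rw [← h1]
    simp [lp.coeFn_smul]
  have rel0 : β * v 0 = lam * v 1 := by
    have h1 := coord1 hT0 hTn v
    rw [hv] at h1
    rw [← h1]
    simp [lp.coeFn_smul]
  -- growth
  have growth : ∀ k : ℕ, 2 ^ k * ‖v 1‖ ≤ ‖v (k + 1)‖ := by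
    intro k
    induction k with
    | zero => simp
    | succ k ih =>
      have h1 : ‖v (k + 1)‖ = ‖lam‖ * ‖v (k + 2)‖ := by
        rw [rel1 (k + 1) (Nat.le_add_left 1 k)]; simp [map_mul]
      have h2 : ‖v (k + 1)‖ ≤ (1 / 2) * ‖v (k + 2)‖ := by
        rw [h1]
        exact mul_le_mul_of_nonneg_right hlamabs (norm_nonneg _)
      have : (2 : ℝ) ^ (k + 1) * ‖v 1‖ = 2 * (2 ^ k * ‖v 1‖) := by
        ring
      rw [this]
      nlinarith
  have hbound : ∀ k : ℕ, ‖v k‖ ≤ ‖v‖ := by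
    intro k
    have := lp.norm_apply_le_norm (by norm_num : (2 : ENNReal) ≠ 0) v k
    simpa using this
  have hv1 : v 1 = 0 := by
    by_contra h
    have hpos : 0 < ‖v 1‖ := norm_pos_iff.mpr h
    obtain ⟨k, hk⟩ := pow_unbounded_of_one_lt (‖v‖ / ‖v 1‖) (by norm_num : (1:ℝ) < 2)
    have : ‖v‖ < 2 ^ k * ‖v 1‖ := by
      rw [div_lt_iff₀ hpos] at hk
      linarith
    have := (growth k).trans (hbound (k + 1))
    linarith
  have hv0 : v 0 = 0 := by
    have : β * v 0 = 0 := by rw [rel0, hv1, mul_zero]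
    exact (mul_eq_zero.mp this).resolve_left hβ
  have hvk : ∀ k : ℕ, v (k + 1) = 0 := by
    intro k
    induction k with
    | zero => exact hv1
    | succ k ih =>
      have := rel1 (k + 1) (Nat.le_add_left 1 k)
      rw [ih] at this
      exact (mul_eq_zero.mp this.symm).resolve_left hlamne
  refine lp.ext (funext fun k => ?_)
  rcases k with _ | k
  · simpa using hv0
  · simpa using hvk k

end Aux

open Aux in
/-- For a nonzero closed `T_{α,β}`-invariant subspace `M`, the subspace
`M₁ = {x ∈ M : ⟨x, e 0⟩ = 0}` is nonzero and invariant, and either `M = M₁` or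
`M ⊖ M₁` is one-dimensional. -/
theorem invariant_subspace_dichotomy (α β : ℂ) (hα : α ≠ 0) (hβ : β ≠ 0)
    (hnorm : ‖α‖ ^ 2 + ‖β‖ ^ 2 = 1)
    (T : H →L[ℂ] H)
    (hT0 : T (e 0) = (α * conj β) • e 0 + β • e 1)
    (hTn : ∀ n : ℕ, 1 ≤ n → T (e n) = e (n + 1))
    (M : Submodule ℂ H) (hMcl : IsClosed (M : Set H)) (hMne : M ≠ ⊥)
    (hMinv : ∀ x ∈ M, T x ∈ M)
    (M₁ : Submodule ℂ H)
    (hM₁ : ∀ x : H, x ∈ M₁ ↔ x ∈ M ∧ (inner ℂ x (e 0) : ℂ) = 0) :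
    M₁ ≠ ⊥ ∧ (∀ x ∈ M₁, T x ∈ M₁) ∧
      (M = M₁ ∨ Module.finrank ℂ ↥(M ⊓ M₁ᗮ) = 1) := by
  have hmem : ∀ x : H, x ∈ M₁ ↔ x ∈ M ∧ x 0 = 0 := by
    intro x
    rw [hM₁ x, inner_e_right]
    simp
  have hM₁le : M₁ ≤ M := fun x hx => (((hmem x).1 hx)).1
  refine ⟨?_, ?_, ?_⟩
  · -- M₁ ≠ ⊥
    obtain ⟨v, hvM, hvne⟩ := Submodule.exists_mem_ne_zero_of_ne_bot hMne
    by_cases hv0 : v 0 = 0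
    · exact Submodule.ne_bot_iff M₁ |>.mpr ⟨v, (hmem v).2 ⟨hvM, hv0⟩, hvne⟩
    · set w : H := T v - (α * conj β) • v with hw
      have hwM : w ∈ M := M.sub_mem (hMinv v hvM) (M.smul_mem _ hvM)
      have hw0 : w 0 = 0 := by
        have : w 0 = (T v) 0 - (α * conj β) * v 0 := by
          rw [hw, lp.coeFn_sub, lp.coeFn_smul]; rfl
        rw [this, coord0 hT0 hTn v, sub_self]
      have hwne : w ≠ 0 := by
        intro h
        have hTv : T v = (α * conj β) • v := by
          have := sub_eq_zero.mp (hw ▸ h)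
          exact this
        exact hvne (eigen_eq_zero hα hβ hnorm hT0 hTn v hTv)
      exact Submodule.ne_bot_iff M₁ |>.mpr ⟨w, (hmem w).2 ⟨hwM, hw0⟩, hwne⟩
  · -- invariance
    intro x hx
    obtain ⟨hxM, hx0⟩ := (hmem x).1 hx
    refine (hmem (T x)).2 ⟨hMinv x hxM, ?_⟩
    rw [coord0 hT0 hTn x, hx0, mul_zero]
  · -- dichotomy
    by_cases hMeq : M = M₁
    · exact Or.inl hMeq
    right
    have hcl₁ : IsClosed (M₁ : Set H) := by
      have hs : (M₁ : Set H) = (M : Set H) ∩ {x : H | (inner ℂ x (e 0) : ℂ) = 0} :=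
        Set.ext fun x => hM₁ x
      rw [hs]
      exact hMcl.inter (isClosed_eq (Continuous.inner continuous_id continuous_const)
        continuous_const)
    haveI : CompleteSpace M₁ := hcl₁.completeSpace_coe
    obtain ⟨v, hvM, hvnM₁⟩ := SetLike.exists_of_lt (lt_of_le_of_ne hM₁le (Ne.symm hMeq))
    have hv0 : v 0 ≠ 0 := fun h => hvnM₁ ((hmem v).2 ⟨hvM, h⟩)
    set u : H := v - (M₁.orthogonalProjection v : H) with hu
    have huO : u ∈ M₁ᗮ := M₁.sub_starProjection_mem_orthogonal v
    have huM : u ∈ M := M.sub_mem hvM (hM₁le (M₁.orthogonalProjection v).2)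
    have hp0 : ((M₁.orthogonalProjection v : H)) 0 = 0 :=
      ((hmem _).1 (M₁.orthogonalProjection v).2).2
    have hu0 : u 0 = v 0 := by
      rw [hu, lp.coeFn_sub, Pi.sub_apply, hp0, sub_zero]
    have hune : u ≠ 0 := fun h => hv0 (by rw [← hu0, h]; simp)
    have huN : u ∈ M ⊓ M₁ᗮ := ⟨huM, huO⟩
    set φ : ↥(M ⊓ M₁ᗮ) →ₗ[ℂ] ℂ :=
      ((innerSL ℂ (e 0)).toLinearMap).comp (M ⊓ M₁ᗮ).subtype with hφ
    have hker : LinearMap.ker φ = ⊥ := by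
      rw [Submodule.eq_bot_iff]
      intro x hx
      have hx0 : ((x : H)) 0 = 0 := by
        have : (inner ℂ (e 0) (x : H) : ℂ) = 0 := hx
        rwa [inner_e_left] at this
      have hxM₁ : (x : H) ∈ M₁ := (hmem _).2 ⟨x.2.1, hx0⟩
      have : (inner ℂ (x : H) (x : H) : ℂ) = 0 :=
        (Submodule.mem_orthogonal M₁ (x : H)).1 x.2.2 (x : H) hxM₁
      exact Subtype.ext (inner_self_eq_zero.mp this)
    have hinj : Function.Injective φ := LinearMap.ker_eq_bot.mp hker
    haveI : FiniteDimensional ℂ ↥(M ⊓ M₁ᗮ) := FiniteDimensional.of_injective φ hinj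
    have h1 : Module.finrank ℂ ↥(M ⊓ M₁ᗮ) ≤ 1 := by
      simpa using LinearMap.finrank_le_finrank_of_injective hinj
    haveI : Nontrivial ↥(M ⊓ M₁ᗮ) :=
      nontrivial_of_ne (⟨u, huN⟩ : ↥(M ⊓ M₁ᗮ)) 0
        (fun h => hune (congrArg Subtype.val h))
    have h2 : 0 < Module.finrank ℂ ↥(M ⊓ M₁ᗮ) := Module.finrank_pos
    omega

end
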